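/- Let y ∈ ℝ^n, δ > 0, and let c ∈ ℝ^{2n} be any vector satisfying ‖c − S^{−1}b‖_S ≤ δ·‖S^{−1}b‖_S, where b = (y; −y) ∈ ℝ^{2n}. Then the vector f = (1/2)·[I, −I]·c ∈ ℝ^n satisfies ‖f − (I + L)^{−1} y‖_{I+L} ≤ δ·‖(I + L)^{−1} y‖_{I+L}. -/

import Mathlib

open Matrix

/-- The norm of a vector `x` with respect to a matrix `K`: `‖x‖_K = √(xᵀ K x)`. -/
noncomputable def matNorm {m : Type*} [Fintype m] (K : Matrix m m ℝ) (x : m → ℝ) : ℝ :=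
  Real.sqrt (x ⬝ᵥ K *ᵥ x)

lemma quad_expand {n : ℕ} (B : Matrix (Fin n) (Fin n) ℝ) (w : Fin n → ℝ) (x : Fin n → ℝ) :
    x ⬝ᵥ (Matrix.diagonal w - B) *ᵥ x
      = ∑ i, ∑ j, ((if i = j then w i else 0) * x i * x j - B i j * x i * x j) := by
  simp only [dotProduct, mulVec, Matrix.sub_apply, Matrix.diagonal_apply, Finset.mul_sum]
  refine Finset.sum_congr rfl fun i _ => Finset.sum_congr rfl fun j _ => ?_
  split_ifs <;> ring

lemma diag_dom_psd {n : ℕ} (B W : Matrix (Fin n) (Fin n) ℝ) (hB : Bᵀ = B)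
    (hW : ∀ i j, |B i j| ≤ W i j) (hWs : ∀ i j, W i j = W j i) (x : Fin n → ℝ) :
    0 ≤ x ⬝ᵥ (Matrix.diagonal (fun i => ∑ j, W i j) - B) *ᵥ x := by
  have hQ : x ⬝ᵥ (Matrix.diagonal (fun i => ∑ j, W i j) - B) *ᵥ x
      = ∑ i, ∑ j, (W i j * x i * x i - B i j * x i * x j) := by
    rw [quad_expand]
    refine Finset.sum_congr rfl fun i _ => ?_
    rw [Finset.sum_sub_distrib, Finset.sum_sub_distrib]
    congr 1
    have : ∀ j : Fin n, (if i = j then (∑ k, W i k) else 0) * x i * x j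
        = if i = j then (∑ k, W i k) * x i * x j else 0 := by
      intro j; split_ifs <;> ring
    simp only [this, Finset.sum_ite_eq, Finset.mem_univ, if_true]
    rw [← Finset.sum_mul, ← Finset.sum_mul]
  rw [hQ]
  have h2 : (0:ℝ) ≤ ∑ i, ∑ j, ((W i j * x i * x i - B i j * x i * x j)
      + (W j i * x j * x j - B j i * x j * x i)) := by
    refine Finset.sum_nonneg fun i _ => Finset.sum_nonneg fun j _ => ?_
    have h1 := hW i j
    have h3 : B j i = B i j := by
      simpa using congrFun (congrFun hB i) j
    have h4 : W j i = W i j := (hWs j i)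
    rw [h3, h4]
    have habs : |B i j * (x i * x j)| ≤ W i j * |x i * x j| := by
      rw [abs_mul]
      exact mul_le_mul_of_nonneg_right h1 (abs_nonneg _)
    have h5 : B i j * (x i * x j) ≤ W i j * |x i * x j| := le_trans (le_abs_self _) habs
    have h6 : 2 * |x i * x j| ≤ x i * x i + x j * x j := by
      rcases abs_cases (x i * x j) with ⟨he, _⟩ | ⟨he, _⟩ <;> rw [he] <;>
        nlinarith [sq_nonneg (x i - x j), sq_nonneg (x i + x j)]
    have hWnn : 0 ≤ W i j := le_trans (abs_nonneg _) h1
    nlinarith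
  have h7 : ∑ i, ∑ j, ((W i j * x i * x i - B i j * x i * x j)
      + (W j i * x j * x j - B j i * x j * x i))
      = 2 * ∑ i, ∑ j, (W i j * x i * x i - B i j * x i * x j) := by
    simp only [Finset.sum_add_distrib]
    rw [Finset.sum_comm]
    ring
  linarith [h7 ▸ h2]

lemma block_quad {n : ℕ} (P N : Matrix (Fin n) (Fin n) ℝ) (u v : Fin n → ℝ) :
    (Sum.elim u v) ⬝ᵥ (Matrix.fromBlocks P N N P) *ᵥ (Sum.elim u v)
      = (1/2) * ((u + v) ⬝ᵥ (P + N) *ᵥ (u + v))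
        + (1/2) * ((u - v) ⬝ᵥ (P - N) *ᵥ (u - v)) := by
  rw [fromBlocks_mulVec, sumElim_dotProduct_sumElim]
  simp only [add_mulVec, sub_mulVec, mulVec_add, mulVec_sub, dotProduct_add, dotProduct_sub,
    add_dotProduct, sub_dotProduct, Sum.elim_comp_inl, Sum.elim_comp_inr]
  linarith

theorem stmt_12 (n : ℕ) (hn : 1 ≤ n) (A : Matrix (Fin n) (Fin n) ℝ)
    (hAsymm : A.IsSymm) (hAdiag : ∀ i, A i i = 0)
    (hAval : ∀ i j, A i j = -1 ∨ A i j = 0 ∨ A i j = 1)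
    (Apos Aneg D L : Matrix (Fin n) (Fin n) ℝ)
    (hApos : ∀ i j, Apos i j = max (A i j) 0)
    (hAneg : ∀ i j, Aneg i j = min (A i j) 0)
    (hD : D = Matrix.diagonal fun i => ∑ j, |A i j|)
    (hL : L = D - A)
    (S : Matrix (Fin n ⊕ Fin n) (Fin n ⊕ Fin n) ℝ)
    (hS : S = Matrix.fromBlocks (1 + D - Apos) Aneg Aneg (1 + D - Apos))
    (y : Fin n → ℝ) (δ : ℝ) (hδ : 0 < δ)
    (c : Fin n ⊕ Fin n → ℝ)
    (hc : matNorm S (c - S⁻¹ *ᵥ Sum.elim y (-y)) ≤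
      δ * matNorm S (S⁻¹ *ᵥ Sum.elim y (-y)))
    (f : Fin n → ℝ)
    (hf : ∀ i, f i = (1 / 2) * (c (Sum.inl i) - c (Sum.inr i))) :
    matNorm (1 + L) (f - (1 + L)⁻¹ *ᵥ y) ≤
      δ * matNorm (1 + L) ((1 + L)⁻¹ *ᵥ y) := by
  -- basic entrywise facts
  have hAt : Aᵀ = A := hAsymm
  have hAsym' : ∀ i j, A j i = A i j := fun i j => by
    simpa using congrFun (congrFun hAt i) j
  set W : Matrix (Fin n) (Fin n) ℝ := Matrix.of (fun i j => |A i j|) with hW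
  have hWs : ∀ i j, W i j = W j i := fun i j => by simp [hW, hAsym' i j]
  have hDW : D = Matrix.diagonal (fun i => ∑ j, W i j) := hD
  -- L is PSD
  have hLpsd : ∀ x : Fin n → ℝ, 0 ≤ x ⬝ᵥ L *ᵥ x := by
    intro x
    rw [hL, hDW]
    exact diag_dom_psd A W hAt (fun i j => le_refl _) hWs x
  -- the "signless" part is PSD
  have habsW : Apos - Aneg = W := by
    ext i j
    simp only [Matrix.sub_apply, hApos, hAneg, hW, Matrix.of_apply]
    rw [max_sub_min_eq_abs]; simp
  have hRpsd : ∀ x : Fin n → ℝ, 0 ≤ x ⬝ᵥ (D - (Apos - Aneg)) *ᵥ x := by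
    intro x
    rw [habsW, hDW]
    refine diag_dom_psd W W ?_ (fun i j => by simp [hW]) hWs x
    ext i j; simp [hW, hAsym' i j]
  -- identifications
  have hPNM : (1 + D - Apos) - Aneg = 1 + L := by
    ext i j
    have : Apos i j + Aneg i j = A i j := by
      rw [hApos, hAneg]
      rcases le_total (A i j) 0 with h | h
      · rw [max_eq_right h, min_eq_left h]; ring
      · rw [max_eq_left h, min_eq_right h]; ring
    simp only [Matrix.sub_apply, Matrix.add_apply, hL]
    linarith
  have hPNR : (1 + D - Apos) + Aneg = 1 + (D - (Apos - Aneg)) := by abel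
  -- quadratic form positivity
  have hMq : ∀ x : Fin n → ℝ, x ⬝ᵥ (1 + L) *ᵥ x = x ⬝ᵥ x + x ⬝ᵥ L *ᵥ x := by
    intro x; rw [add_mulVec, one_mulVec, dotProduct_add]
  have hRq : ∀ x : Fin n → ℝ, x ⬝ᵥ (1 + (D - (Apos - Aneg))) *ᵥ x
      = x ⬝ᵥ x + x ⬝ᵥ (D - (Apos - Aneg)) *ᵥ x := by
    intro x; rw [add_mulVec, one_mulVec, dotProduct_add]
  have hselfnn : ∀ x : Fin n → ℝ, 0 ≤ x ⬝ᵥ x :=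
    fun x => Finset.sum_nonneg fun i _ => mul_self_nonneg _
  have hself : ∀ x : Fin n → ℝ, x ≠ 0 → 0 < x ⬝ᵥ x := by
    intro x hx
    rcases (hselfnn x).lt_or_eq with h | h
    · exact h
    · exact absurd (dotProduct_self_eq_zero.mp h.symm) hx
  have hMnn : ∀ x : Fin n → ℝ, 0 ≤ x ⬝ᵥ (1 + L) *ᵥ x := fun x => by
    rw [hMq]; have := hLpsd x; have := hselfnn x; linarith
  have hRnn : ∀ x : Fin n → ℝ, 0 ≤ x ⬝ᵥ (1 + (D - (Apos - Aneg))) *ᵥ x := fun x => by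
    rw [hRq]; have := hRpsd x; have := hselfnn x; linarith
  have hMpos : ∀ x : Fin n → ℝ, x ≠ 0 → 0 < x ⬝ᵥ (1 + L) *ᵥ x := fun x hx => by
    rw [hMq]; have := hLpsd x; have := hself x hx; linarith
  have hRpos : ∀ x : Fin n → ℝ, x ≠ 0 →
      0 < x ⬝ᵥ (1 + (D - (Apos - Aneg))) *ᵥ x := fun x hx => by
    rw [hRq]; have := hRpsd x; have := hself x hx; linarith
  -- symmetry facts
  have hDt : Dᵀ = D := by rw [hD]; exact Matrix.diagonal_transpose _
  have hApost : Aposᵀ = Apos := by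
    ext i j; rw [Matrix.transpose_apply, hApos, hApos, hAsym' i j]
  have hAnegt : Anegᵀ = Aneg := by
    ext i j; rw [Matrix.transpose_apply, hAneg, hAneg, hAsym' i j]
  have hMt : (1 + L)ᵀ = 1 + L := by
    rw [hL, transpose_add, transpose_one, transpose_sub, hDt, hAt]
  have hSt : Sᵀ = S := by
    rw [hS, Matrix.fromBlocks_transpose, transpose_sub, transpose_add, transpose_one,
      hDt, hApost, hAnegt]
  have herm : ∀ {m' : Type} [Fintype m'] (Mm : Matrix m' m' ℝ), Mmᵀ = Mm → Mm.IsHermitian := by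
    intro m' _ Mm h
    ext i j
    rw [Matrix.conjTranspose_apply, star_trivial]
    exact congrFun (congrFun h i) j
  -- positive definiteness of 1 + L and S
  have hMposdef : (1 + L).PosDef :=
    Matrix.PosDef.of_dotProduct_mulVec_pos (herm _ hMt) fun x hx => by simpa using hMpos x hx
  have hSposdef : S.PosDef := by
    refine Matrix.PosDef.of_dotProduct_mulVec_pos (herm _ hSt) fun x hx => ?_
    have hx' : Sum.elim (x ∘ Sum.inl) (x ∘ Sum.inr) = x := Sum.elim_comp_inl_inr x
    set u := x ∘ Sum.inl with hu
    set v := x ∘ Sum.inr with hv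
    have key : x ⬝ᵥ S *ᵥ x = (1/2) * ((u + v) ⬝ᵥ (1 + (D - (Apos - Aneg))) *ᵥ (u + v))
        + (1/2) * ((u - v) ⬝ᵥ (1 + L) *ᵥ (u - v)) := by
      rw [← hx', hS, block_quad, hPNR, hPNM]
    simp only [star_trivial]
    rw [key]
    by_cases h1 : u - v = 0
    · have h2 : u + v ≠ 0 := by
        intro h2
        apply hx
        rw [← hx']
        have hu0 : u = 0 := by
          funext i
          have e1 := congrFun h1 i
          have e2 := congrFun h2 i
          simp only [Pi.sub_apply, Pi.add_apply, Pi.zero_apply] at e1 e2 ⊢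
          linarith
        have hv0 : v = 0 := by
          funext i
          have e1 := congrFun h1 i
          have e2 := congrFun h2 i
          simp only [Pi.sub_apply, Pi.add_apply, Pi.zero_apply] at e1 e2 ⊢
          linarith
        rw [hu0, hv0]
        funext z; cases z <;> rfl
      have := hRpos _ h2
      have := hMnn (u - v)
      linarith
    · have := hMpos _ h1
      have := hRnn (u + v)
      linarith
  have hMunit : IsUnit (1 + L).det := hMposdef.det_pos.ne'.isUnit
  have hSunit : IsUnit S.det := hSposdef.det_pos.ne'.isUnit
  -- the exact solution
  set w := (1 + L)⁻¹ *ᵥ y with hwdef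
  have hyw : (1 + L) *ᵥ w = y := by
    rw [hwdef, mulVec_mulVec, mul_nonsing_inv _ hMunit, one_mulVec]
  have hsolve : S⁻¹ *ᵥ (Sum.elim y (-y)) = Sum.elim w (-w) := by
    have hSw : S *ᵥ Sum.elim w (-w) = Sum.elim y (-y) := by
      rw [hS, fromBlocks_mulVec]
      simp only [Sum.elim_comp_inl, Sum.elim_comp_inr]
      have c1 : (1 + D - Apos) *ᵥ w + Aneg *ᵥ (-w) = y := by
        rw [mulVec_neg, ← sub_eq_add_neg, ← sub_mulVec, hPNM, hyw]
      have c2 : Aneg *ᵥ w + (1 + D - Apos) *ᵥ (-w) = -y := by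
        rw [← c1, mulVec_neg, mulVec_neg]
        abel
      rw [c1, c2]
    rw [← hSw, mulVec_mulVec, nonsing_inv_mul _ hSunit, one_mulVec]
  rw [hsolve] at hc
  -- decompose the error vector
  set u' : Fin n → ℝ := fun i => c (Sum.inl i) - w i with hu'
  set v' : Fin n → ℝ := fun i => c (Sum.inr i) + w i with hv'
  have he : c - Sum.elim w (-w) = Sum.elim u' v' := by
    funext z
    cases z with
    | inl i => simp [hu']
    | inr i => simp [hv', sub_neg_eq_add]
  have hsc : ∀ (Mm : Matrix (Fin n) (Fin n) ℝ) (z : Fin n → ℝ),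
      ((2:ℝ) • z) ⬝ᵥ Mm *ᵥ ((2:ℝ) • z) = 4 * (z ⬝ᵥ Mm *ᵥ z) := by
    intro Mm z
    rw [mulVec_smul, dotProduct_smul, smul_dotProduct]
    simp only [smul_eq_mul]
    ring
  have hufv : u' - v' = (2:ℝ) • (f - w) := by
    funext i
    simp only [Pi.sub_apply, Pi.smul_apply, hu', hv', smul_eq_mul, hf i]
    ring
  have hkey1 : (c - Sum.elim w (-w)) ⬝ᵥ S *ᵥ (c - Sum.elim w (-w))
      = (1/2) * ((u' + v') ⬝ᵥ (1 + (D - (Apos - Aneg))) *ᵥ (u' + v'))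
        + 2 * ((f - w) ⬝ᵥ (1 + L) *ᵥ (f - w)) := by
    rw [he, hS, block_quad, hPNR, hPNM, hufv, hsc]
    ring
  have hkey2 : (Sum.elim w (-w)) ⬝ᵥ S *ᵥ (Sum.elim w (-w)) = 2 * (w ⬝ᵥ (1 + L) *ᵥ w) := by
    rw [hS, block_quad, hPNR, hPNM]
    have h0 : w + (-w) = 0 := by funext i; simp
    have h1 : w - (-w) = (2:ℝ) • w := by
      funext i; simp only [Pi.sub_apply, Pi.neg_apply, Pi.smul_apply, smul_eq_mul]; ring
    rw [h0, h1, hsc]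
    simp only [zero_dotProduct]
    ring
  -- final computation with square roots
  have hQfw := hMnn (f - w)
  have hQw := hMnn w
  have hQR := hRnn (u' + v')
  unfold matNorm at hc ⊢
  have step1 : Real.sqrt (2 * ((f - w) ⬝ᵥ (1 + L) *ᵥ (f - w)))
      ≤ Real.sqrt ((c - Sum.elim w (-w)) ⬝ᵥ S *ᵥ (c - Sum.elim w (-w))) := by
    apply Real.sqrt_le_sqrt
    rw [hkey1]
    linarith
  have step2 : Real.sqrt ((Sum.elim w (-w)) ⬝ᵥ S *ᵥ (Sum.elim w (-w)))
      = Real.sqrt (2 * (w ⬝ᵥ (1 + L) *ᵥ w)) := by rw [hkey2]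
  have sqrt2 : (0:ℝ) < Real.sqrt 2 := Real.sqrt_pos.2 (by norm_num)
  have hmul1 : Real.sqrt (2 * ((f - w) ⬝ᵥ (1 + L) *ᵥ (f - w)))
      = Real.sqrt 2 * Real.sqrt ((f - w) ⬝ᵥ (1 + L) *ᵥ (f - w)) :=
    Real.sqrt_mul (by norm_num) _
  have hmul2 : Real.sqrt (2 * (w ⬝ᵥ (1 + L) *ᵥ w))
      = Real.sqrt 2 * Real.sqrt (w ⬝ᵥ (1 + L) *ᵥ w) :=
    Real.sqrt_mul (by norm_num) _
  have big : Real.sqrt 2 * Real.sqrt ((f - w) ⬝ᵥ (1 + L) *ᵥ (f - w))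
      ≤ Real.sqrt 2 * (δ * Real.sqrt (w ⬝ᵥ (1 + L) *ᵥ w)) := by
    rw [← hmul1]
    calc Real.sqrt (2 * ((f - w) ⬝ᵥ (1 + L) *ᵥ (f - w)))
        ≤ Real.sqrt ((c - Sum.elim w (-w)) ⬝ᵥ S *ᵥ (c - Sum.elim w (-w))) := step1
      _ ≤ δ * Real.sqrt ((Sum.elim w (-w)) ⬝ᵥ S *ᵥ (Sum.elim w (-w))) := hc
      _ = δ * (Real.sqrt 2 * Real.sqrt (w ⬝ᵥ (1 + L) *ᵥ w)) := by rw [step2, hmul2]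
      _ = Real.sqrt 2 * (δ * Real.sqrt (w ⬝ᵥ (1 + L) *ᵥ w)) := by ring
  exact le_of_mul_le_mul_left big sqrt2
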